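/- With γ(z) = z²(P̂ₙ - 1) + zĤ - 1 and W(z) = det γ(z): every root z of W with |z| < 1 is real. -/

import Mathlib

open Matrix

/-- Orthogonal projection onto the first `n` coordinates of `ℂ^(n+m)`. -/
noncomputable def Pn (n m : ℕ) : Matrix (Fin n ⊕ Fin m) (Fin n ⊕ Fin m) ℂ :=
  Matrix.fromBlocks 1 0 0 0

/-- `γ(z) = z²(P̂ₙ - 1) + zĤ - 1`. -/
noncomputable def gam {n m : ℕ} (H : Matrix (Fin n ⊕ Fin m) (Fin n ⊕ Fin m) ℂ)
    (z : ℂ) : Matrix (Fin n ⊕ Fin m) (Fin n ⊕ Fin m) ℂ :=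
  z ^ 2 • (Pn n m - 1) + z • H - 1

theorem stmt6 {n m : ℕ} (H : Matrix (Fin n ⊕ Fin m) (Fin n ⊕ Fin m) ℂ)
    (hH : H.IsHermitian) (z : ℂ) (hz : ‖z‖ < 1)
    (hroot : (gam H z).det = 0) : z.im = 0 := by
  obtain ⟨v, hv, hmul⟩ := Matrix.exists_mulVec_eq_zero_iff.mpr hroot
  have hdot : star v ⬝ᵥ ((gam H z) *ᵥ v) = 0 := by rw [hmul, dotProduct_zero]
  have hexp : z ^ 2 * (star v ⬝ᵥ ((Pn n m - 1) *ᵥ v)) + z * (star v ⬝ᵥ (H *ᵥ v))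
      - star v ⬝ᵥ v = 0 := by
    simpa [gam, add_mulVec, sub_mulVec, smul_mulVec, one_mulVec,
      dotProduct_add, dotProduct_sub, dotProduct_smul, smul_eq_mul] using hdot
  set A : ℝ := ∑ j, Complex.normSq (v (Sum.inr j)) with hAdef
  set S : ℝ := ∑ i, Complex.normSq (v i) with hSdef
  have hP : Pn n m - (1 : Matrix (Fin n ⊕ Fin m) (Fin n ⊕ Fin m) ℂ)
      = Matrix.fromBlocks 0 0 0 (-1) := by
    rw [← Matrix.fromBlocks_one]
    unfold Pn
    ext (i | i) (j | j) <;> simp [Matrix.one_apply]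
  have hA : star v ⬝ᵥ ((Pn n m - 1) *ᵥ v) = -(A : ℂ) := by
    rw [hP]
    push_cast [hAdef]
    simp [Matrix.mulVec, dotProduct, Fintype.sum_sum_type, Matrix.one_apply,
      Finset.mul_sum, ← Complex.normSq_eq_conj_mul_self, Finset.sum_neg_distrib]
  have hS : star v ⬝ᵥ v = (S : ℂ) := by
    push_cast [hSdef]
    simp [dotProduct, ← Complex.normSq_eq_conj_mul_self]
  set h : ℂ := star v ⬝ᵥ (H *ᵥ v) with hhdef
  have hconj : star h = h := by
    rw [hhdef, ← Matrix.star_dotProduct, Matrix.star_mulVec, ← Matrix.dotProduct_mulVec, hH.eq]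
  have him : h.im = 0 := Complex.conj_eq_iff_im.mp (by rw [← Complex.star_def]; exact hconj)
  have E : z ^ 2 * (-(A : ℂ)) + z * h - (S : ℂ) = 0 := by
    rw [← hA, ← hS]; exact hexp
  have Ere := congrArg Complex.re E
  have Eim := congrArg Complex.im E
  simp only [Complex.add_re, Complex.add_im, Complex.sub_re, Complex.sub_im, Complex.mul_re,
    Complex.mul_im, Complex.neg_re, Complex.neg_im, Complex.ofReal_re, Complex.ofReal_im,
    Complex.zero_re, Complex.zero_im, pow_two, him] at Ere Eim
  have hS0 : 0 < S := by
    rw [hSdef]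
    obtain ⟨i, hi⟩ := Function.ne_iff.mp hv
    exact Finset.sum_pos' (fun j _ => Complex.normSq_nonneg _)
      ⟨i, Finset.mem_univ i, Complex.normSq_pos.mpr hi⟩
  have hA0 : 0 ≤ A := Finset.sum_nonneg fun j _ => Complex.normSq_nonneg _
  have hAS : A ≤ S := by
    rw [hSdef, hAdef, Fintype.sum_sum_type]
    have : 0 ≤ ∑ i : Fin n, Complex.normSq (v (Sum.inl i)) :=
      Finset.sum_nonneg fun j _ => Complex.normSq_nonneg _
    linarith
  have habs : z.re * z.re + z.im * z.im < 1 := by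
    have : Complex.normSq z < 1 := by
      rw [← Complex.sq_norm]
      nlinarith [norm_nonneg z]
    rwa [Complex.normSq_apply] at this
  by_contra hb
  have hfac : z.im * (h.re - 2 * z.re * A) = 0 := by linear_combination Eim
  have hEq : h.re - 2 * z.re * A = 0 := by
    rcases mul_eq_zero.mp hfac with h1 | h1
    · exact absurd h1 hb
    · exact h1
  have hkey : A * (z.re * z.re + z.im * z.im) = S := by
    linear_combination Ere - z.re * hEq
  have hApos : 0 < A := by
    rcases lt_or_ge 0 A with h1 | h1
    · exact h1
    · nlinarith [mul_self_nonneg z.re, mul_self_nonneg z.im]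
  nlinarith [mul_lt_mul_of_pos_left habs hApos]
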